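/- Let K ≥ 2 and let θ_1, …, θ_K be independent Gaussian random variables with θ_i ∼ N(μ̂_i, 1/N_i) for integers N_i ≥ 1. Let π maximize the M=2 ReMax objective J(π) = Σ_{i,j} π_i π_j E[max(θ_i, θ_j)] (with the diagonal convention E[max(θ_i, θ_i)] = μ̂_i) over the probability simplex Δ^{K-1}. Fix ε > 0, μ₁ ∈ ℝ, and an integer n ≥ 1 with N_1 = n and μ̂_1 ≤ μ₁ − ε. Define E := (1/4)·E_{θ₁∼N(μ̂_1, 1/n)}[ max(θ_1 − (μ₁ − ε), 0) ], S := { i ∈ [K] : N_i ≥ max(4/(πE²), n+1) }, H := { i ∈ S : i ≠ 1 and μ̂_i > μ₁ − ε }, and L := max_{i∈[K]} μ̂_i − min_{i∈[K]} μ̂_i. If Σ_{i∈H} π_i < 1/4, then Σ_{j∉S} π_j ≥ min( 1/4, E/(2(L+1)) ). -/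

import Mathlib

open MeasureTheory ProbabilityTheory
open scoped NNReal Classical

/-- The joint posterior: independent Gaussian coordinates `θ_i ∼ N(μ̂_i, 1/N_i)`. -/
noncomputable def gaussPosterior (K : ℕ) (μhat : Fin K → ℝ) (N : Fin K → ℕ) :
    Measure (Fin K → ℝ) :=
  Measure.pi fun i => gaussianReal (μhat i) ((N i : ℝ≥0))⁻¹

/-- The `M = 2` ReMax objective `J(π) = Σ_{i,j} π_i π_j E[max(θ_i, θ_j)]`, where a
repeated draw of the same arm reuses the same posterior sample (so the diagonal term is
`E[θ_i] = μ̂_i`). -/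
noncomputable def remaxJ2 (K : ℕ) (μhat : Fin K → ℝ) (N : Fin K → ℕ)
    (π : Fin K → ℝ) : ℝ :=
  ∫ θ, ∑ i, ∑ j, π i * π j * max (θ i) (θ j) ∂(gaussPosterior K μhat N)

section FreezeAux

open Real Set Filter
open scoped ENNReal Topology

set_option linter.unusedSectionVars false


lemma myIoiIntegral {b : ℝ} (hb : 0 < b) :
    ∫ x in Ioi (0:ℝ), x * Real.exp (-b * x ^ 2) = (2 * b)⁻¹ := by
  have A : ∀ x : ℝ, HasDerivAt (fun y : ℝ => -(2 * b)⁻¹ * Real.exp (-b * y ^ 2))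
      (x * Real.exp (-b * x ^ 2)) x := by
    intro x
    convert ((hasDerivAt_pow 2 x).const_mul (-b)).exp.const_mul (-(2 * b)⁻¹) using 1
    · rfl
    · rfl
    field_simp
    ring
  have B : Tendsto (fun y : ℝ => -(2 * b)⁻¹ * Real.exp (-b * y ^ 2)) atTop
      (𝓝 (-(2 * b)⁻¹ * 0)) := by
    refine Tendsto.const_mul _ ?_
    refine Real.tendsto_exp_atBot.comp ?_
    exact (tendsto_pow_atTop two_ne_zero).const_mul_atTop_of_neg (neg_lt_zero.2 hb)
  have := integral_Ioi_of_hasDerivAt_of_tendsto' (a := (0:ℝ))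
    (f := fun y : ℝ => -(2 * b)⁻¹ * Real.exp (-b * y ^ 2))
    (fun x _ => A x) (integrable_mul_exp_neg_mul_sq hb).integrableOn B
  simpa using this

variable {m c : ℝ} {v : ℝ≥0}

lemma integral_gaussianReal_eq (hv : v ≠ 0) (f : ℝ → ℝ) :
    ∫ x, f x ∂(gaussianReal m v) = ∫ x, gaussianPDFReal m v x * f x := by
  rw [gaussianReal_of_var_ne_zero _ hv]
  have hm : Measurable fun x => (gaussianPDFReal m v x).toNNReal :=
    (measurable_gaussianPDFReal m v).real_toNNReal
  have hd : gaussianPDF m v = fun x => ((gaussianPDFReal m v x).toNNReal : ℝ≥0∞) := rfl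
  rw [hd, integral_withDensity_eq_integral_smul hm f]
  congr 1
  ext x
  simp [NNReal.smul_def, Real.coe_toNNReal _ (gaussianPDFReal_nonneg m v x)]

lemma integrable_gaussianReal_iff (hv : v ≠ 0) {f : ℝ → ℝ} :
    Integrable f (gaussianReal m v) ↔
      Integrable (fun x => f x * gaussianPDFReal m v x) volume := by
  rw [gaussianReal_of_var_ne_zero _ hv,
    integrable_withDensity_iff (measurable_gaussianPDF m v)
      (ae_of_all _ fun x => ENNReal.ofReal_lt_top)]
  refine integrable_congr (ae_of_all _ fun x => ?_)
  simp [gaussianPDF, ENNReal.toReal_ofReal (gaussianPDFReal_nonneg m v x)]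

lemma gaussianPDFReal_eq (x : ℝ) :
    gaussianPDFReal m v x
      = (√(2 * π * v))⁻¹ * Real.exp (-(2 * (v:ℝ))⁻¹ * (x - m) ^ 2) := by
  rw [gaussianPDFReal]
  congr 1
  rw [neg_div, div_eq_mul_inv]
  ring

lemma integrable_id_gaussianReal (hv : v ≠ 0) :
    Integrable (fun x : ℝ => x) (gaussianReal m v) := by
  rw [integrable_gaussianReal_iff hv]
  have hv' : (0:ℝ) < (v:ℝ) := by positivity
  have hb : (0:ℝ) < (2 * (v:ℝ))⁻¹ := by positivity
  have h1 : Integrable (fun y : ℝ => (√(2 * π * v))⁻¹ *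
      ((y + m) * Real.exp (-(2 * (v:ℝ))⁻¹ * y ^ 2))) volume := by
    refine Integrable.const_mul ?_ _
    have h2 := (integrable_mul_exp_neg_mul_sq hb).add
      ((integrable_exp_neg_mul_sq hb).const_mul m)
    refine h2.congr (ae_of_all _ fun y => ?_)
    simp only [Pi.add_apply]
    ring
  have h3 := h1.comp_sub_right m
  refine h3.congr (ae_of_all _ fun x => ?_)
  simp only [gaussianPDFReal_eq, sub_add_cancel]
  ring

lemma integrable_linbound_gaussianReal (hv : v ≠ 0) {f : ℝ → ℝ}
    (hmeas : Measurable f) {A B : ℝ} (hbound : ∀ x, |f x| ≤ A + B * |x|) :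
    Integrable f (gaussianReal m v) := by
  have habs : Integrable (fun x : ℝ => A + B * |x|) (gaussianReal m v) :=
    (integrable_const A).add (((integrable_id_gaussianReal hv).abs).const_mul B)
  exact Integrable.mono' habs hmeas.aestronglyMeasurable
    (ae_of_all _ fun x => by simpa using hbound x)

lemma integrable_posPart_gaussianReal (hv : v ≠ 0) (c : ℝ) :
    Integrable (fun x : ℝ => max (x - c) 0) (gaussianReal m v) := by
  refine integrable_linbound_gaussianReal hv
    ((measurable_id.sub_const c).max measurable_const) (A := |c|) (B := 1) fun x => ?_
  rw [abs_of_nonneg (le_max_right _ _)]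
  rcases le_or_gt x c with h | h
  · rw [max_eq_right (by linarith)]
    positivity
  · rw [max_eq_left (by linarith)]
    cases abs_cases x <;> cases abs_cases c <;> cases abs_cases (x - c) <;> linarith

lemma integral_id_gaussianReal (hv : v ≠ 0) :
    ∫ x, x ∂(gaussianReal m v) = m := by
  have h1 : (gaussianReal m v).map (fun x : ℝ => (-1 : ℝ) * x) = gaussianReal (-m) v := by
    have := gaussianReal_map_const_mul (μ := m) (v := v) (-1)
    convert this using 2
    · norm_num
    · ext
      norm_num
  have h2 : (gaussianReal (-m) v).map (fun x : ℝ => x + 2 * m) = gaussianReal m v := by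
    have := gaussianReal_map_add_const (μ := -m) (v := v) (2 * m)
    convert this using 2
    ring
  have hmap : (gaussianReal m v).map (fun x : ℝ => 2 * m - x) = gaussianReal m v := by
    conv_rhs => rw [← h2, ← h1]
    rw [Measure.map_map (measurable_id'.add_const _) (measurable_id'.const_mul _)]
    congr 1
    ext x
    simp only [Function.comp_apply]
    ring
  have hint := integrable_id_gaussianReal (m := m) (v := v) hv
  have hφ : Measurable fun x : ℝ => 2 * m - x := measurable_const.sub measurable_id
  have := integral_map (μ := gaussianReal m v) (φ := fun x : ℝ => 2 * m - x)
    (f := fun x : ℝ => x) hφ.aemeasurable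
    (by rw [hmap]; exact hint.1)
  rw [hmap] at this
  have h3 : ∫ x, (2 * m - x) ∂(gaussianReal m v) = 2 * m - ∫ x, x ∂(gaussianReal m v) := by
    rw [integral_sub (integrable_const _) hint, integral_const]
    simp
  rw [this, h3] at *
  linarith [this]

lemma integral_posPart_gaussianReal (hv : v ≠ 0) :
    ∫ x, max (x - m) 0 ∂(gaussianReal m v) = √((v:ℝ) / (2 * π)) := by
  have hv' : (0:ℝ) < (v:ℝ) := by positivity
  have hmap : (gaussianReal 0 v).map (fun x : ℝ => x + m) = gaussianReal m v := by
    simpa using gaussianReal_map_add_const (μ := 0) (v := v) m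
  rw [← hmap, integral_map (φ := fun x : ℝ => x + m) (f := fun x : ℝ => max (x - m) 0)
    (measurable_id'.add_const m).aemeasurable
    (((measurable_id.sub_const m).max measurable_const).aestronglyMeasurable)]
  simp only [add_sub_cancel_right]
  rw [integral_gaussianReal_eq hv]
  have hind : (fun x : ℝ => gaussianPDFReal 0 v x * max x 0)
      = Set.indicator (Ioi (0:ℝ)) (fun x => gaussianPDFReal 0 v x * x) := by
    funext x
    rcases le_or_gt x 0 with h | h
    · rw [max_eq_right h, indicator_of_notMem (by simpa using h)]
      simp
    · rw [max_eq_left h.le, indicator_of_mem (by simpa using h)]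
  rw [hind, integral_indicator measurableSet_Ioi]
  have hb : (0:ℝ) < (2 * (v:ℝ))⁻¹ := by positivity
  have heq : ∀ x : ℝ, gaussianPDFReal 0 v x * x
      = (√(2 * π * (v:ℝ)))⁻¹ * (x * Real.exp (-(2 * (v:ℝ))⁻¹ * x ^ 2)) := by
    intro x
    rw [gaussianPDFReal_eq]
    simp only [sub_zero]
    ring
  rw [MeasureTheory.setIntegral_congr_fun measurableSet_Ioi fun x _ => heq x,
    integral_const_mul, myIoiIntegral hb]
  have hval : (2 * (2 * (v:ℝ))⁻¹)⁻¹ = (v:ℝ) := by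
    rw [mul_inv, inv_inv]
    field_simp
  rw [hval]
  have key : (v:ℝ)/(2*π) = ((√(2*π*(v:ℝ)))⁻¹ * v)^2 := by
    have hs : (√(2*π*(v:ℝ)))^2 = 2*π*(v:ℝ) := Real.sq_sqrt (by positivity)
    rw [mul_pow, inv_pow, hs]
    field_simp
  rw [key, Real.sqrt_sq (by positivity)]

lemma integral_posPart_le (hv : v ≠ 0) (hc : m ≤ c) :
    ∫ x, max (x - c) 0 ∂(gaussianReal m v) ≤ √((v:ℝ) / (2 * π)) := by
  rw [← integral_posPart_gaussianReal hv]
  refine integral_mono (integrable_posPart_gaussianReal hv c)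
    (integrable_posPart_gaussianReal hv m) fun x => ?_
  exact max_le_max (by linarith) le_rfl

lemma integral_posPart_pos (hv : v ≠ 0) (c : ℝ) :
    0 < ∫ x, max (x - c) 0 ∂(gaussianReal m v) := by
  rw [integral_pos_iff_support_of_nonneg (f := fun x : ℝ => max (x - c) 0)
    (fun x => le_max_right (x - c) 0) (integrable_posPart_gaussianReal hv c)]
  have hsupp : (Function.support fun x : ℝ => max (x - c) 0) = Ioi c := by
    ext x
    simp only [Function.mem_support, mem_Ioi]
    constructor
    · intro h
      by_contra hx
      push_neg at hx
      exact h (max_eq_right (by linarith))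
    · intro h
      rw [max_eq_left (by linarith)]
      exact ne_of_gt (by linarith)
  rw [hsupp]
  have hne : gaussianReal m v (Ioi c) ≠ 0 := by
    rw [gaussianReal_apply _ hv]
    intro h0
    rw [lintegral_eq_zero_iff (measurable_gaussianPDF m v)] at h0
    have hF : ∀ᵐ x ∂(volume.restrict (Ioi c)), False :=
      h0.mono fun x hx => (gaussianPDF_pos _ hv x).ne' hx
    rw [ae_iff] at hF
    simp [Measure.restrict_apply_univ, Real.volume_Ioi] at hF
  exact lt_of_le_of_ne zero_le (Ne.symm hne)



lemma map_eval_pi_prob {K : ℕ} (μs : Fin K → Measure ℝ) [∀ i, IsProbabilityMeasure (μs i)]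
    (i : Fin K) : (Measure.pi μs).map (Function.eval i) = μs i := by
  ext s hs
  rw [Measure.map_apply (measurable_pi_apply i) hs]
  have hpre : Function.eval i ⁻¹' s
      = Set.pi Set.univ (Function.update (fun _ : Fin K => (Set.univ : Set ℝ)) i s) := by
    rw [Set.eval_preimage]
  rw [hpre, Measure.pi_pi]
  rw [Finset.prod_eq_single i]
  · simp
  · intro j _ hj
    rw [Function.update_of_ne hj]
    simp
  · simp

lemma max_le_pointwise {x y a b : ℝ} :
    max x y ≤ max a b + max (x - a) 0 + max (y - b) 0 := by
  have hx : x - a ≤ max (x - a) 0 := le_max_left _ _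
  have hy : y - b ≤ max (y - b) 0 := le_max_left _ _
  have h0x : (0:ℝ) ≤ max (x - a) 0 := le_max_right _ _
  have h0y : (0:ℝ) ≤ max (y - b) 0 := le_max_right _ _
  have ha : a ≤ max a b := le_max_left _ _
  have hb : b ≤ max a b := le_max_right _ _
  exact max_le (by linarith) (by linarith)

lemma freeze_pointwise {x y c : ℝ} :
    y + max (x - c) 0 - max (y - c) 0 ≤ max x y := by
  rcases le_total x c with h | h
  · have e1 : max (x - c) 0 = 0 := max_eq_right (by linarith)
    have h2 : (0:ℝ) ≤ max (y - c) 0 := le_max_right _ _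
    have := le_max_right x y
    linarith
  · rcases le_total y c with h' | h'
    · have e1 : max (x - c) 0 = x - c := max_eq_left (by linarith)
      have h2 : (0:ℝ) ≤ max (y - c) 0 := le_max_right _ _
      have := le_max_left x y
      linarith
    · have e1 : max (y - c) 0 = y - c := max_eq_left (by linarith)
      rcases max_choice (x - c) 0 with e2 | e2
      · have := le_max_left x y
        linarith
      · have := le_max_right x y
        linarith

section Ent

variable {K : ℕ} {μhat : Fin K → ℝ} {N : Fin K → ℕ}

noncomputable def gEnt (μhat : Fin K → ℝ) (N : Fin K → ℕ) (i j : Fin K) : ℝ :=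
  if i = j then μhat i else ∫ θ, max (θ i) (θ j) ∂(gaussPosterior K μhat N)

noncomputable def eBnd (N : Fin K → ℕ) (i : Fin K) : ℝ :=
  √(((((N i : ℝ≥0))⁻¹ : ℝ≥0) : ℝ) / (2 * π))

lemma eBnd_nonneg (i : Fin K) : 0 ≤ eBnd N i := Real.sqrt_nonneg _

instance instProbGaussPosterior (K : ℕ) (μhat : Fin K → ℝ) (N : Fin K → ℕ) :
    IsProbabilityMeasure (gaussPosterior K μhat N) :=
  inferInstanceAs (IsProbabilityMeasure (Measure.pi _))

variable (hN : ∀ i, 1 ≤ N i)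
include hN

lemma hvne (i : Fin K) : ((N i : ℝ≥0))⁻¹ ≠ 0 := by
  have h1 : (N i : ℝ≥0) ≠ 0 := by
    simp only [ne_eq, Nat.cast_eq_zero]
    have := hN i
    omega
  simpa using h1

lemma map_eval_gauss (i : Fin K) :
    (gaussPosterior K μhat N).map (Function.eval i)
      = gaussianReal (μhat i) ((N i : ℝ≥0))⁻¹ :=
  map_eval_pi_prob _ i

lemma integral_eval_gauss {f : ℝ → ℝ} (hf : Measurable f) (i : Fin K) :
    ∫ θ, f (θ i) ∂(gaussPosterior K μhat N)
      = ∫ x, f x ∂(gaussianReal (μhat i) ((N i : ℝ≥0))⁻¹) := by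
  rw [← map_eval_gauss (μhat := μhat) hN i,
    integral_map (measurable_pi_apply i).aemeasurable hf.aestronglyMeasurable]

lemma integrable_eval_gauss (i : Fin K) {f : ℝ → ℝ} (hf : Measurable f)
    (hint : Integrable f (gaussianReal (μhat i) ((N i : ℝ≥0))⁻¹)) :
    Integrable (fun θ : Fin K → ℝ => f (θ i)) (gaussPosterior K μhat N) := by
  have hmap := map_eval_gauss (μhat := μhat) hN i
  have h1 : AEStronglyMeasurable f ((gaussPosterior K μhat N).map (Function.eval i)) := by
    rw [hmap]; exact hf.aestronglyMeasurable
  have h2 : Integrable f ((gaussPosterior K μhat N).map (Function.eval i)) := by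
    rw [hmap]; exact hint
  exact (integrable_map_measure h1 (measurable_pi_apply i).aemeasurable).mp h2

lemma integrable_coord (i : Fin K) :
    Integrable (fun θ : Fin K → ℝ => θ i) (gaussPosterior K μhat N) :=
  integrable_eval_gauss hN i measurable_id (integrable_id_gaussianReal (hvne hN i))

lemma integral_coord (i : Fin K) :
    ∫ θ, θ i ∂(gaussPosterior K μhat N) = μhat i := by
  have h := integral_eval_gauss (μhat := μhat) (f := fun x => x) hN measurable_id i
  rw [integral_id_gaussianReal (hvne hN i)] at h
  exact h

lemma integrable_posPart_coord (i : Fin K) (c : ℝ) :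
    Integrable (fun θ : Fin K → ℝ => max (θ i - c) 0) (gaussPosterior K μhat N) :=
  integrable_eval_gauss hN i ((measurable_id.sub_const c).max measurable_const)
    (integrable_posPart_gaussianReal (hvne hN i) c)

lemma integral_posPart_coord (i : Fin K) (c : ℝ) :
    ∫ θ, max (θ i - c) 0 ∂(gaussPosterior K μhat N)
      = ∫ x, max (x - c) 0 ∂(gaussianReal (μhat i) ((N i : ℝ≥0))⁻¹) :=
  integral_eval_gauss hN ((measurable_id.sub_const c).max measurable_const) i

lemma integrable_max_coord (i j : Fin K) :
    Integrable (fun θ : Fin K → ℝ => max (θ i) (θ j)) (gaussPosterior K μhat N) := by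
  have h1 := (integrable_coord (μhat := μhat) hN i).abs
  have h2 := (integrable_coord (μhat := μhat) hN j).abs
  refine (h1.add h2).mono'
    ((measurable_pi_apply i).max (measurable_pi_apply j)).aestronglyMeasurable
    (ae_of_all _ fun θ => ?_)
  simp only [Real.norm_eq_abs, Pi.add_apply]
  rcases max_cases (θ i) (θ j) with ⟨h, _⟩ | ⟨h, _⟩ <;> rw [h] <;>
    [linarith [abs_nonneg (θ j)]; linarith [abs_nonneg (θ i)]]

lemma integral_max_eq_gEnt (i j : Fin K) :
    ∫ θ, max (θ i) (θ j) ∂(gaussPosterior K μhat N) = gEnt μhat N i j := by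
  rcases eq_or_ne i j with rfl | hij
  · simp only [gEnt, if_pos rfl, max_self]
    exact integral_coord hN i
  · rw [gEnt, if_neg hij]

lemma gEnt_symm (i j : Fin K) : gEnt μhat N i j = gEnt μhat N j i := by
  rcases eq_or_ne i j with rfl | hij
  · rfl
  · rw [gEnt, gEnt, if_neg hij, if_neg hij.symm]
    have h : (fun θ : Fin K → ℝ => max (θ i) (θ j)) = fun θ => max (θ j) (θ i) := by
      funext θ
      exact max_comm _ _
    rw [h]

lemma remaxJ2_eq_sum (p : Fin K → ℝ) :
    remaxJ2 K μhat N p = ∑ i, ∑ j, p i * p j * gEnt μhat N i j := by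
  rw [remaxJ2, integral_finset_sum _ fun i _ =>
    integrable_finset_sum _ fun j _ => (integrable_max_coord hN i j).const_mul _]
  refine Finset.sum_congr rfl fun i _ => ?_
  rw [integral_finset_sum _ fun j _ => (integrable_max_coord hN i j).const_mul _]
  refine Finset.sum_congr rfl fun j _ => ?_
  rw [integral_const_mul, integral_max_eq_gEnt hN]

lemma gEnt_ge_max (i j : Fin K) : max (μhat i) (μhat j) ≤ gEnt μhat N i j := by
  rcases eq_or_ne i j with rfl | hij
  · simp [gEnt]
  · rw [gEnt, if_neg hij]
    refine max_le ?_ ?_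
    · rw [← integral_coord (μhat := μhat) hN i]
      exact integral_mono (integrable_coord hN i) (integrable_max_coord hN i j)
        fun θ => le_max_left _ _
    · rw [← integral_coord (μhat := μhat) hN j]
      exact integral_mono (integrable_coord hN j) (integrable_max_coord hN i j)
        fun θ => le_max_right _ _

lemma gEnt_le_max_add (i j : Fin K) :
    gEnt μhat N i j ≤ max (μhat i) (μhat j) + eBnd N i + eBnd N j := by
  have hei := eBnd_nonneg (N := N) i
  have hej := eBnd_nonneg (N := N) j
  rcases eq_or_ne i j with rfl | hij
  · rw [gEnt, if_pos rfl]
    have := max_self (μhat i)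
    have h1 : μhat i ≤ max (μhat i) (μhat i) := le_max_left _ _
    linarith
  · rw [gEnt, if_neg hij]
    have hA : Integrable (fun θ : Fin K → ℝ =>
        max (μhat i) (μhat j) + max (θ i - μhat i) 0) (gaussPosterior K μhat N) :=
      (integrable_const _).add (integrable_posPart_coord hN i _)
    have hB : Integrable (fun θ : Fin K → ℝ => max (θ j - μhat j) 0)
        (gaussPosterior K μhat N) := integrable_posPart_coord hN j _
    have hint : Integrable (fun θ : Fin K → ℝ =>
        max (μhat i) (μhat j) + max (θ i - μhat i) 0 + max (θ j - μhat j) 0)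
        (gaussPosterior K μhat N) := hA.add hB
    have hmono := integral_mono (integrable_max_coord hN i j) hint
      fun θ => max_le_pointwise
    rw [integral_add hA hB, integral_add (integrable_const _) (integrable_posPart_coord hN i _),
      integral_const, integral_posPart_coord hN i, integral_posPart_coord hN j,
      integral_posPart_gaussianReal (hvne hN i), integral_posPart_gaussianReal (hvne hN j)]
      at hmono
    simpa [eBnd] using hmono

lemma gEnt_freeze_ge (i1 k : Fin K) (hk : k ≠ i1) (c : ℝ) :
    μhat k + (∫ x, max (x - c) 0 ∂(gaussianReal (μhat i1) ((N i1 : ℝ≥0))⁻¹))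
      - (∫ x, max (x - c) 0 ∂(gaussianReal (μhat k) ((N k : ℝ≥0))⁻¹))
      ≤ gEnt μhat N i1 k := by
  rw [gEnt, if_neg (Ne.symm hk)]
  have hA : Integrable (fun θ : Fin K → ℝ => θ k + max (θ i1 - c) 0)
      (gaussPosterior K μhat N) :=
    (integrable_coord hN k).add (integrable_posPart_coord hN i1 c)
  have hB : Integrable (fun θ : Fin K → ℝ => max (θ k - c) 0)
      (gaussPosterior K μhat N) := integrable_posPart_coord hN k c
  have hint : Integrable (fun θ : Fin K → ℝ =>
      θ k + max (θ i1 - c) 0 - max (θ k - c) 0) (gaussPosterior K μhat N) := hA.sub hB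
  have hmono := integral_mono hint (integrable_max_coord hN i1 k)
    fun θ => freeze_pointwise
  rw [integral_sub hA hB,
    integral_add (integrable_coord hN k) (integrable_posPart_coord hN i1 c),
    integral_coord hN k, integral_posPart_coord hN i1, integral_posPart_coord hN k]
    at hmono
  exact hmono

end Ent
section FirstOrder

variable {K : ℕ} {μhat : Fin K → ℝ} {N : Fin K → ℕ}

private noncomputable def eVec (t : Fin K) : Fin K → ℝ := fun k => if k = t then 1 else 0

lemma sum_eVec (t : Fin K) : ∑ k, eVec (K := K) t k = 1 := by
  simp [eVec]

lemma sumL_collapse (g : Fin K → Fin K → ℝ) (w : Fin K → ℝ) (t : Fin K) :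
    ∑ i, ∑ j, eVec t i * w j * g i j = ∑ j, w j * g t j := by
  rw [Finset.sum_eq_single t]
  · simp [eVec]
  · intro b _ hb
    simp [eVec, hb]
  · simp

lemma sumR_collapse (g : Fin K → Fin K → ℝ) (w : Fin K → ℝ) (t : Fin K) :
    ∑ i, ∑ j, w i * eVec t j * g i j = ∑ i, w i * g i t := by
  refine Finset.sum_congr rfl fun i _ => ?_
  rw [Finset.sum_eq_single t]
  · simp [eVec]
  · intro b _ hb
    simp [eVec, hb]
  · simp

lemma sumLR_collapse (g : Fin K → Fin K → ℝ) (s t : Fin K) :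
    ∑ i, ∑ j, eVec s i * eVec t j * g i j = g s t := by
  rw [sumL_collapse]
  rw [Finset.sum_eq_single t]
  · simp [eVec]
  · intro b _ hb
    simp [eVec, hb]
  · simp

lemma first_order (hN : ∀ i, 1 ≤ N i) (p : Fin K → ℝ) (hp0 : ∀ i, 0 ≤ p i)
    (hp1 : ∑ i, p i = 1)
    (hmax : ∀ q : Fin K → ℝ, (∀ i, 0 ≤ q i) → (∑ i, q i = 1) →
      remaxJ2 K μhat N q ≤ remaxJ2 K μhat N p)
    (a b : Fin K) (hab : a ≠ b) (hpb : 0 < p b) :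
    ∑ k, p k * (gEnt μhat N a k - gEnt μhat N b k) ≤ 0 := by
  by_contra hD'
  push_neg at hD'
  set g := gEnt μhat N with hg
  set D := ∑ k, p k * (g a k - g b k) with hDdef
  set Q := g a a - 2 * g a b + g b b with hQdef
  have hQ1 : (0:ℝ) < |Q| + 1 := by positivity
  set δ := min (p b) (D / (|Q| + 1)) with hδdef
  have hδpos : 0 < δ := lt_min hpb (div_pos hD' hQ1)
  have hδb : δ ≤ p b := min_le_left _ _
  have hδQ : δ * (|Q| + 1) ≤ D := by
    have := min_le_right (p b) (D / (|Q| + 1))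
    calc δ * (|Q| + 1) ≤ D / (|Q| + 1) * (|Q| + 1) :=
          mul_le_mul_of_nonneg_right this hQ1.le
      _ = D := by field_simp
  set q : Fin K → ℝ := fun k => p k + δ * eVec a k - δ * eVec b k with hqdef
  have hq0 : ∀ k, 0 ≤ q k := by
    intro k
    by_cases hka : k = a
    · subst hka
      have := hp0 k
      simp [hqdef, eVec, hab]
      linarith
    · by_cases hkb : k = b
      · subst hkb
        simp [hqdef, eVec, hka]
        linarith
      · have := hp0 k
        simp [hqdef, eVec, hka, hkb]
        linarith
  have hq1 : ∑ k, q k = 1 := by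
    simp only [hqdef]
    rw [Finset.sum_sub_distrib, Finset.sum_add_distrib, ← Finset.mul_sum, ← Finset.mul_sum,
      sum_eVec, sum_eVec, hp1]
    ring
  have hle := hmax q hq0 hq1
  rw [remaxJ2_eq_sum hN, remaxJ2_eq_sum hN] at hle
  have hexp : ∑ i, ∑ j, q i * q j * gEnt μhat N i j
      = (∑ i, ∑ j, p i * p j * gEnt μhat N i j) + 2 * δ * D + δ ^ 2 * Q := by
    have expand : ∀ i j, q i * q j * g i j =
        p i * p j * g i j
        + δ * (eVec a i * p j * g i j) + δ * (p i * eVec a j * g i j)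
        - δ * (eVec b i * p j * g i j) - δ * (p i * eVec b j * g i j)
        + δ^2 * (eVec a i * eVec a j * g i j) - δ^2 * (eVec a i * eVec b j * g i j)
        - δ^2 * (eVec b i * eVec a j * g i j) + δ^2 * (eVec b i * eVec b j * g i j) := by
      intro i j
      simp only [hqdef]
      ring
    calc ∑ i, ∑ j, q i * q j * gEnt μhat N i j
        = ∑ i, ∑ j, (p i * p j * g i j
          + δ * (eVec a i * p j * g i j) + δ * (p i * eVec a j * g i j)
          - δ * (eVec b i * p j * g i j) - δ * (p i * eVec b j * g i j)
          + δ^2 * (eVec a i * eVec a j * g i j) - δ^2 * (eVec a i * eVec b j * g i j)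
          - δ^2 * (eVec b i * eVec a j * g i j) + δ^2 * (eVec b i * eVec b j * g i j)) := by
          refine Finset.sum_congr rfl fun i _ => Finset.sum_congr rfl fun j _ => expand i j
      _ = (∑ i, ∑ j, p i * p j * g i j)
          + δ * (∑ i, ∑ j, eVec a i * p j * g i j) + δ * (∑ i, ∑ j, p i * eVec a j * g i j)
          - δ * (∑ i, ∑ j, eVec b i * p j * g i j) - δ * (∑ i, ∑ j, p i * eVec b j * g i j)
          + δ^2 * (∑ i, ∑ j, eVec a i * eVec a j * g i j)
          - δ^2 * (∑ i, ∑ j, eVec a i * eVec b j * g i j)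
          - δ^2 * (∑ i, ∑ j, eVec b i * eVec a j * g i j)
          + δ^2 * (∑ i, ∑ j, eVec b i * eVec b j * g i j) := by
          simp only [Finset.sum_add_distrib, Finset.sum_sub_distrib, Finset.mul_sum]
      _ = (∑ i, ∑ j, p i * p j * g i j) + 2 * δ * D + δ ^ 2 * Q := by
          rw [sumL_collapse, sumL_collapse, sumR_collapse, sumR_collapse,
            sumLR_collapse, sumLR_collapse, sumLR_collapse, sumLR_collapse]
          have hsymm1 : ∑ i, p i * g i a = ∑ k, p k * g a k := by
            refine Finset.sum_congr rfl fun i _ => ?_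
            rw [hg, gEnt_symm hN]
          have hsymm2 : ∑ i, p i * g i b = ∑ k, p k * g b k := by
            refine Finset.sum_congr rfl fun i _ => ?_
            rw [hg, gEnt_symm hN]
          rw [hsymm1, hsymm2]
          have hD2 : D = ∑ k, p k * g a k - ∑ k, p k * g b k := by
            rw [hDdef, (Finset.sum_sub_distrib _ _).symm]
            refine Finset.sum_congr rfl fun k _ => ?_
            ring
          have hgab : g a b = g b a := by rw [hg]; exact gEnt_symm hN a b
          rw [hD2, hQdef, hgab]
          ring
  rw [hexp] at hle
  have hfinal : 2 * δ * D + δ ^ 2 * Q ≤ 0 := by linarith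
  have habs : -|Q| ≤ Q := neg_abs_le Q
  nlinarith [mul_le_mul_of_nonneg_left hδQ hδpos.le, sq_nonneg δ, mul_pos hδpos hD']

end FirstOrder

end FreezeAux

set_option maxHeartbeats 1000000

/-- Freeze Lemma: if the optimal arm 1 is underestimated (`μ̂_1 ≤ μ₁ − ε`, with `N_1 = n`)
and the sufficiently-sampled-but-optimistic arms `H` carry probability mass less than
`1/4` under the ReMax-optimal distribution `π`, then the arms outside the sufficiently
sampled set `S` carry probability mass at least `min(1/4, E/(2(L+1)))`. -/
theorem freeze_lemma
    (K : ℕ) (hK : 2 ≤ K)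
    (μhat : Fin K → ℝ) (N : Fin K → ℕ) (hN : ∀ i, 1 ≤ N i)
    (π : Fin K → ℝ) (hπ0 : ∀ i, 0 ≤ π i) (hπ1 : ∑ i, π i = 1)
    (hmax : ∀ π' : Fin K → ℝ, (∀ i, 0 ≤ π' i) → (∑ i, π' i = 1) →
      remaxJ2 K μhat N π' ≤ remaxJ2 K μhat N π)
    (ε : ℝ) (hε : 0 < ε) (μ₁ : ℝ) (n : ℕ) (hn : 1 ≤ n)
    (i1 : Fin K) (hi1 : (i1 : ℕ) = 0)
    (hN1 : N i1 = n) (hunder : μhat i1 ≤ μ₁ - ε) :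
    -- `E`: a quarter of the expected improvement of arm 1 over the threshold `μ₁ − ε`
    let E : ℝ := (1 / 4) * ∫ x, max (x - (μ₁ - ε)) 0 ∂(gaussianReal (μhat i1) ((n : ℝ≥0))⁻¹)
    -- `S`: the sufficiently sampled arms
    let S : Finset (Fin K) :=
      Finset.univ.filter fun i => max (4 / (Real.pi * E ^ 2)) ((n : ℝ) + 1) ≤ (N i : ℝ)
    -- `H`: sufficiently sampled non-optimal arms that still appear overly optimistic
    let H : Finset (Fin K) := S.filter fun i => i ≠ i1 ∧ μ₁ - ε < μhat i
    -- `L`: the empirical-mean range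
    let L : ℝ := (⨆ i, μhat i) - (⨅ i, μhat i)
    (∑ i ∈ H, π i) < 1 / 4 →
      min (1 / 4) (E / (2 * (L + 1))) ≤ ∑ j ∈ Finset.univ \ S, π j := by
  intro E S HH L hH
  by_contra hcon
  push_neg at hcon
  set c := μ₁ - ε with hc
  have hEdef : E = (1 / 4) * ∫ x, max (x - c) 0 ∂(gaussianReal (μhat i1) ((n : ℝ≥0))⁻¹) := rfl
  have hSdef : S = Finset.univ.filter
      (fun i => max (4 / (Real.pi * E ^ 2)) ((n : ℝ) + 1) ≤ (N i : ℝ)) := rfl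
  have hHdef : HH = S.filter (fun i => i ≠ i1 ∧ c < μhat i) := rfl
  have hLdef : L = (⨆ i, μhat i) - (⨅ i, μhat i) := rfl
  have hvn : ((n : ℝ≥0))⁻¹ ≠ 0 := by
    have h1 : (n : ℝ≥0) ≠ 0 := by
      simp only [ne_eq, Nat.cast_eq_zero]
      omega
    simpa using h1
  have hE : 0 < E := by
    rw [hEdef]
    have := integral_posPart_pos (m := μhat i1) hvn c
    linarith
  haveI : Nonempty (Fin K) := ⟨i1⟩
  have hsup : ∀ i, μhat i ≤ ⨆ k, μhat k := fun i =>
    le_ciSup (Set.Finite.bddAbove (Set.finite_range μhat)) i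
  have hinf : ∀ i, (⨅ k, μhat k) ≤ μhat i := fun i =>
    ciInf_le (Set.Finite.bddBelow (Set.finite_range μhat)) i
  have hL0 : 0 ≤ L := by
    rw [hLdef]
    linarith [hsup i1, hinf i1]
  have hLe1 : 0 < 2 * (L + 1) := by linarith
  have hβ1 : ∑ j ∈ Finset.univ \ S, π j < 1 / 4 :=
    lt_of_lt_of_le hcon (min_le_left _ _)
  have hβ2 : ∑ j ∈ Finset.univ \ S, π j < E / (2 * (L + 1)) :=
    lt_of_lt_of_le hcon (min_le_right _ _)
  have hβ0 : 0 ≤ ∑ j ∈ Finset.univ \ S, π j := Finset.sum_nonneg fun i _ => hπ0 i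
  have hh0 : 0 ≤ ∑ i ∈ HH, π i := Finset.sum_nonneg fun i _ => hπ0 i
  have hSmem : ∀ k, k ∈ S ↔ max (4 / (Real.pi * E ^ 2)) ((n : ℝ) + 1) ≤ (N k : ℝ) := by
    intro k
    rw [hSdef]
    simp
  have hi1S : i1 ∉ S := by
    rw [hSmem]
    push_neg
    have hNi1 : (N i1 : ℝ) = n := by rw [hN1]
    rw [hNi1]
    calc (n : ℝ) < (n : ℝ) + 1 := by linarith
      _ ≤ _ := le_max_right _ _
  have hco : ∀ k : Fin K, ((((N k : ℝ≥0))⁻¹ : ℝ≥0) : ℝ) = ((N k : ℝ))⁻¹ := by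
    intro k
    push_cast
    ring
  have hNpos : ∀ k : Fin K, (0 : ℝ) < (N k : ℝ) := by
    intro k
    have := hN k
    exact_mod_cast Nat.cast_pos.mpr (by omega)
  have hπpi := Real.pi_gt_three
  have heAll : ∀ k, eBnd N k ≤ 1 / 2 := by
    intro k
    have h1k : (1 : ℝ) ≤ (N k : ℝ) := by exact_mod_cast hN k
    have hki : ((N k : ℝ))⁻¹ ≤ 1 := by
      rw [← inv_one]
      exact inv_anti₀ one_pos h1k
    simp only [eBnd]
    rw [hco k]
    calc Real.sqrt (((N k : ℝ))⁻¹ / (2 * Real.pi)) ≤ Real.sqrt ((1 / 2) ^ 2) := by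
          refine Real.sqrt_le_sqrt ?_
          rw [div_le_iff₀ (by positivity)]
          nlinarith
      _ = 1 / 2 := Real.sqrt_sq (by norm_num)
  have heS : ∀ k ∈ S, eBnd N k ≤ E / 2 := by
    intro k hk
    have hNk : 4 / (Real.pi * E ^ 2) ≤ (N k : ℝ) :=
      le_trans (le_max_left _ _) ((hSmem k).mp hk)
    have hA4 : (0 : ℝ) < 4 / (Real.pi * E ^ 2) := by positivity
    have hinv : ((N k : ℝ))⁻¹ ≤ Real.pi * E ^ 2 / 4 := by
      have h2 := inv_anti₀ hA4 hNk
      rwa [inv_div] at h2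
    simp only [eBnd]
    rw [hco k]
    calc Real.sqrt (((N k : ℝ))⁻¹ / (2 * Real.pi)) ≤ Real.sqrt ((E / 2) ^ 2) := by
          refine Real.sqrt_le_sqrt ?_
          rw [div_le_iff₀ (by positivity)]
          nlinarith
      _ = E / 2 := Real.sqrt_sq (by linarith)
  have hEk : ∀ k ∈ S, μhat k ≤ c →
      (∫ x, max (x - c) 0 ∂(gaussianReal (μhat k) ((N k : ℝ≥0))⁻¹)) ≤ E / 2 := by
    intro k hk hkc
    calc (∫ x, max (x - c) 0 ∂(gaussianReal (μhat k) ((N k : ℝ≥0))⁻¹))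
        ≤ Real.sqrt ((((N k : ℝ≥0))⁻¹ : ℝ) / (2 * Real.pi)) :=
          integral_posPart_le (hvne hN k) hkc
      _ = eBnd N k := rfl
      _ ≤ E / 2 := heS k hk
  have hI1 : ∫ x, max (x - c) 0 ∂(gaussianReal (μhat i1) ((N i1 : ℝ≥0))⁻¹) = 4 * E := by
    rw [hN1, hEdef]
    ring
  -- the well-sampled pessimistic arms that carry mass
  set A : Finset (Fin K) := S \ HH with hAdef
  set T : Finset (Fin K) := A.filter (fun k => 0 < π k) with hTdef
  have hHS : HH ⊆ S := by
    rw [hHdef]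
    exact Finset.filter_subset _ _
  have hsd1 : ∑ j ∈ Finset.univ \ S, π j + ∑ j ∈ S, π j = 1 := by
    rw [Finset.sum_sdiff (Finset.subset_univ S)]
    exact hπ1
  have hsd2 : ∑ j ∈ A, π j + ∑ j ∈ HH, π j = ∑ j ∈ S, π j := Finset.sum_sdiff hHS
  have hTA : ∑ j ∈ T, π j = ∑ j ∈ A, π j :=
    Finset.sum_filter_of_ne fun x _ hx => lt_of_le_of_ne (hπ0 x) (Ne.symm hx)
  have ha : 1 / 2 < ∑ j ∈ T, π j := by
    rw [hTA]
    linarith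
  have hTne : T.Nonempty := by
    rcases T.eq_empty_or_nonempty with hemp | hne
    · rw [hemp, Finset.sum_empty] at ha
      linarith
    · exact hne
  obtain ⟨j₀, hj₀T, hj₀min⟩ := Finset.exists_min_image T μhat hTne
  have hj₀A : j₀ ∈ A := (Finset.mem_filter.mp hj₀T).1
  have hπj₀ : 0 < π j₀ := (Finset.mem_filter.mp hj₀T).2
  have hj₀S : j₀ ∈ S := (Finset.mem_sdiff.mp hj₀A).1
  have hAc : ∀ k ∈ A, μhat k ≤ c ∧ k ≠ i1 := by
    intro k hk
    have hkS : k ∈ S := (Finset.mem_sdiff.mp hk).1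
    have hkH : k ∉ HH := (Finset.mem_sdiff.mp hk).2
    have hkne : k ≠ i1 := fun h => hi1S (h ▸ hkS)
    refine ⟨?_, hkne⟩
    by_contra hgt
    push_neg at hgt
    exact hkH (by rw [hHdef]; exact Finset.mem_filter.mpr ⟨hkS, hkne, hgt⟩)
  obtain ⟨hj₀c, hj₀ne'⟩ := hAc j₀ hj₀A
  have hj₀ne : i1 ≠ j₀ := Ne.symm hj₀ne'
  have hD := first_order hN π hπ0 hπ1 hmax i1 j₀ hj₀ne hπj₀
  set CL : ℝ := L + 1 / 2 + E / 2 with hCL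
  set ℓ : Fin K → ℝ := fun k =>
    if k ∈ T then π k * (5 / 2 * E)
    else if k ∈ HH then π k * (-E)
    else if k ∈ S then 0
    else π k * (-CL) with hℓ
  have hTsubS : ∀ {k}, k ∈ T → k ∈ S := fun hk =>
    (Finset.mem_sdiff.mp (Finset.mem_filter.mp hk).1).1
  have hTsubA : ∀ {k}, k ∈ T → k ∈ A := fun hk => (Finset.mem_filter.mp hk).1
  have hbound : ∀ k, ℓ k ≤ π k * (gEnt μhat N i1 k - gEnt μhat N j₀ k) := by
    intro k
    by_cases hkT : k ∈ T
    · -- well-sampled pessimistic arm with mass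
      have hkA := hTsubA hkT
      have hkS := hTsubS hkT
      obtain ⟨hkc, hkne⟩ := hAc k hkA
      have hfree := gEnt_freeze_ge (μhat := μhat) hN i1 k hkne c
      rw [hI1] at hfree
      have hIk := hEk k hkS hkc
      have hlow : μhat k + 4 * E - E / 2 ≤ gEnt μhat N i1 k := by linarith
      simp only [hℓ, if_pos hkT]
      by_cases hkj : k = j₀
      · subst hkj
        have hdiag : gEnt μhat N k k = μhat k := if_pos rfl
        rw [hdiag]
        refine mul_le_mul_of_nonneg_left (by linarith) (hπ0 k)
      · have hup := gEnt_le_max_add (μhat := μhat) hN j₀ k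
        have hmaxeq : max (μhat j₀) (μhat k) = μhat k := max_eq_right (hj₀min k hkT)
        rw [hmaxeq] at hup
        have he1 := heS j₀ hj₀S
        have he2 := heS k hkS
        refine mul_le_mul_of_nonneg_left (by linarith) (hπ0 k)
    · by_cases hkH : k ∈ HH
      · -- optimistic well-sampled arm
        have hkS : k ∈ S := hHS hkH
        have hkc : c < μhat k := by
          rw [hHdef] at hkH
          exact (Finset.mem_filter.mp hkH).2.2
        have hlow : μhat k ≤ gEnt μhat N i1 k :=
          le_trans (le_max_right _ _) (gEnt_ge_max (μhat := μhat) hN i1 k)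
        have hup := gEnt_le_max_add (μhat := μhat) hN j₀ k
        have hmaxeq : max (μhat j₀) (μhat k) = μhat k := max_eq_right (by linarith)
        rw [hmaxeq] at hup
        have he1 := heS j₀ hj₀S
        have he2 := heS k hkS
        simp only [hℓ, if_neg hkT, if_pos hkH]
        refine mul_le_mul_of_nonneg_left (by linarith) (hπ0 k)
      · by_cases hkS : k ∈ S
        · -- no mass
          have hπk : π k = 0 := by
            by_contra hne
            have hpos : 0 < π k := lt_of_le_of_ne (hπ0 k) (Ne.symm hne)
            exact hkT (Finset.mem_filter.mpr ⟨Finset.mem_sdiff.mpr ⟨hkS, hkH⟩, hpos⟩)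
          simp only [hℓ, if_neg hkT, if_neg hkH, if_pos hkS, hπk]
          simp
        · -- insufficiently sampled arm
          have hlow : max (μhat i1) (μhat k) ≤ gEnt μhat N i1 k := gEnt_ge_max (μhat := μhat) hN i1 k
          have hup := gEnt_le_max_add (μhat := μhat) hN j₀ k
          have he1 := heS j₀ hj₀S
          have he2 := heAll k
          have hm1 : max (μhat j₀) (μhat k) ≤ ⨆ i, μhat i := max_le (hsup j₀) (hsup k)
          have hm2 : (⨅ i, μhat i) ≤ max (μhat i1) (μhat k) :=
            le_trans (hinf k) (le_max_right _ _)
          simp only [hℓ, if_neg hkT, if_neg hkH, if_neg hkS]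
          refine mul_le_mul_of_nonneg_left ?_ (hπ0 k)
          rw [hCL, hLdef]
          linarith
  have hDl : ∑ k, ℓ k ≤ ∑ k, π k * (gEnt μhat N i1 k - gEnt μhat N j₀ k) :=
    Finset.sum_le_sum fun k _ => hbound k
  have hsum : ∑ k, ℓ k = (∑ k ∈ T, π k) * (5 / 2 * E) + (∑ k ∈ HH, π k) * (-E)
      + (∑ k ∈ Finset.univ \ S, π k) * (-CL) := by
    have e1 : ∑ k, ℓ k = ∑ k ∈ Finset.univ \ S, ℓ k + ∑ k ∈ S, ℓ k :=
      (Finset.sum_sdiff (Finset.subset_univ S)).symm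
    have e2 : ∑ k ∈ S, ℓ k = ∑ k ∈ A, ℓ k + ∑ k ∈ HH, ℓ k := (Finset.sum_sdiff hHS).symm
    have e3 : ∑ k ∈ T, ℓ k = ∑ k ∈ A, ℓ k := by
      refine Finset.sum_subset (Finset.filter_subset _ _) ?_
      intro x hxA hxT
      have hxS : x ∈ S := (Finset.mem_sdiff.mp hxA).1
      have hxH : x ∉ HH := (Finset.mem_sdiff.mp hxA).2
      simp [hℓ, hxT, hxH, hxS]
    have vT : ∑ k ∈ T, ℓ k = (∑ k ∈ T, π k) * (5 / 2 * E) := by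
      rw [Finset.sum_mul]
      refine Finset.sum_congr rfl fun k hk => ?_
      simp [hℓ, hk]
    have vH : ∑ k ∈ HH, ℓ k = (∑ k ∈ HH, π k) * (-E) := by
      rw [Finset.sum_mul]
      refine Finset.sum_congr rfl fun k hk => ?_
      have hkT : k ∉ T := fun hkT =>
        (Finset.mem_sdiff.mp (hTsubA hkT)).2 hk
      simp [hℓ, hkT, hk]
    have vO : ∑ k ∈ Finset.univ \ S, ℓ k = (∑ k ∈ Finset.univ \ S, π k) * (-CL) := by
      rw [Finset.sum_mul]
      refine Finset.sum_congr rfl fun k hk => ?_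
      have hkS : k ∉ S := (Finset.mem_sdiff.mp hk).2
      have hkT : k ∉ T := fun hkT => hkS (hTsubS hkT)
      have hkH : k ∉ HH := fun hkH => hkS (hHS hkH)
      simp [hℓ, hkT, hkH, hkS]
    rw [e1, e2, ← e3, vT, vH, vO]
    ring
  have key : (∑ k ∈ T, π k) * (5 / 2 * E) + (∑ k ∈ HH, π k) * (-E)
      + (∑ k ∈ Finset.univ \ S, π k) * (-CL) ≤ 0 := by
    rw [← hsum]
    exact le_trans hDl hD
  have p1 : (1 / 2 : ℝ) * (5 / 2 * E) < (∑ k ∈ T, π k) * (5 / 2 * E) :=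
    mul_lt_mul_of_pos_right ha (by positivity)
  have p2 : (∑ k ∈ HH, π k) * E ≤ 1 / 4 * E :=
    mul_le_mul_of_nonneg_right hH.le hE.le
  have p3 : (∑ j ∈ Finset.univ \ S, π j) * (2 * (L + 1)) < E :=
    (lt_div_iff₀ hLe1).mp hβ2
  have p4 : (∑ j ∈ Finset.univ \ S, π j) * E ≤ 1 / 4 * E :=
    mul_le_mul_of_nonneg_right hβ1.le hE.le
  rw [hCL] at key
  nlinarith [key, p1, p2, p3, p4, hE, hβ0, hh0, hL0]
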